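/- Let k be a field in which -1 is not a sum of two squares, and let ℒ_3 be the free 2-step nilpotent Lie algebra over k on generators x_1, x_2, x_3, x_4. Let I be the 3-dimensional central ideal of ℒ_3 spanned by [x_1,x_2] + [x_3,x_4], [x_1,x_3] - [x_2,x_4], and [x_1,x_4] + [x_2,x_3]. Then ℒ_3/I is a 2-step nilpotent Camina Lie algebra over k, minimally generated by 4 elements, of breadth type (0,3). In particular, over any such field there exists a 4-generated 2-step nilpotent Camina Lie algebra of breadth type (0,3). -/

import Mathlib

/- Common definitions: breadth, breadth type, derived subalgebra, Camina Lie algebras,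
nilpotency class, minimal generation, and free nilpotent Lie algebras. -/

open Module

section Defs

variable (k : Type*) [Field k]

/-- The breadth of an element `x` of a Lie algebra: the rank of the adjoint map `ad x`
(equivalently, the codimension of the centralizer of `x`). -/
noncomputable def breadth (L : Type*) [LieRing L] [LieAlgebra k L] (x : L) : ℕ :=
  Module.finrank k (LinearMap.range (LieAlgebra.ad k L x))

/-- A Lie algebra has breadth type `S` if `S` is exactly the set of breadths of its elements. -/
def HasBreadthType (L : Type*) [LieRing L] [LieAlgebra k L] (S : Set ℕ) : Prop :=
  Set.range (breadth k L) = S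

/-- The derived subalgebra `L' = [L, L]` as a Lie ideal. -/
abbrev derivedIdeal (L : Type*) [LieRing L] [LieAlgebra k L] : LieIdeal k L :=
  ⁅(⊤ : LieIdeal k L), (⊤ : LieIdeal k L)⁆

lemma lie_mem_derivedIdeal (L : Type*) [LieRing L] [LieAlgebra k L] (x y : L) :
    ⁅x, y⁆ ∈ derivedIdeal k L :=
  LieSubmodule.lie_mem_lie (LieSubmodule.mem_top x) (LieSubmodule.mem_top y)

/-- A Camina Lie algebra: `[x, L] = L'` for every `x ∈ L \ L'`. -/
def IsCamina (L : Type*) [LieRing L] [LieAlgebra k L] : Prop :=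
  ∀ x : L, x ∉ derivedIdeal k L →
    LinearMap.range (LieAlgebra.ad k L x) = (derivedIdeal k L).toSubmodule

/-- A Lie algebra is nilpotent of class exactly `c`. -/
def IsNilpotentOfClass (L : Type*) [LieRing L] [LieAlgebra k L] (c : ℕ) : Prop :=
  LieModule.lowerCentralSeries k L L c = ⊥ ∧ ∀ b < c, LieModule.lowerCentralSeries k L L b ≠ ⊥

/-- A Lie algebra is minimally generated by `n` elements: some `n` elements generate it
and no fewer elements generate it. -/
def MinimallyGenerated (L : Type*) [LieRing L] [LieAlgebra k L] (n : ℕ) : Prop :=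
  (∃ s : Finset L, s.card = n ∧ LieSubalgebra.lieSpan k L ↑s = ⊤) ∧
  ∀ s : Finset L, LieSubalgebra.lieSpan k L ↑s = ⊤ → n ≤ s.card

/-- The free `c`-step nilpotent Lie algebra on `n` generators: the quotient of the free
Lie algebra on `n` generators by the `(c+1)`-st term `γ_{c+1}` of its lower central series. -/
abbrev FreeNilp (c n : ℕ) :=
  FreeLieAlgebra k (Fin n) ⧸
    LieModule.lowerCentralSeries k (FreeLieAlgebra k (Fin n)) (FreeLieAlgebra k (Fin n)) c

/-- The canonical generators of the free `c`-step nilpotent Lie algebra on `n` generators. -/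
noncomputable def gen (c n : ℕ) (i : Fin n) : FreeNilp k c n :=
  LieSubmodule.Quotient.mk
    (N := LieModule.lowerCentralSeries k (FreeLieAlgebra k (Fin n)) (FreeLieAlgebra k (Fin n)) c)
    (FreeLieAlgebra.of k i)

end Defs

/-- The 3-dimensional central ideal of `ℒ₃` spanned by `[x₁,x₂] + [x₃,x₄]`,
`[x₁,x₃] - [x₂,x₄]` and `[x₁,x₄] + [x₂,x₃]`. -/
noncomputable def idealK (k : Type*) [Field k] : LieIdeal k (FreeNilp k 2 4) :=
  LieSubmodule.lieSpan k (FreeNilp k 2 4)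
    {⁅gen k 2 4 0, gen k 2 4 1⁆ + ⁅gen k 2 4 2, gen k 2 4 3⁆,
     ⁅gen k 2 4 0, gen k 2 4 2⁆ - ⁅gen k 2 4 1, gen k 2 4 3⁆,
     ⁅gen k 2 4 0, gen k 2 4 3⁆ + ⁅gen k 2 4 1, gen k 2 4 2⁆}

section MAlgDef
variable (k : Type*) [Field k]
def MAlg (k : Type*) [Field k] : Type _ := Fin 7 → k
instance : AddCommGroup (MAlg k) := Pi.addCommGroup
instance : Module k (MAlg k) := Pi.module _ _ _
variable {k}
def mbr (x y : MAlg k) : MAlg k := fun i =>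
  if i = 4 then x 0 * y 1 - x 1 * y 0 - x 2 * y 3 + x 3 * y 2
  else if i = 5 then x 0 * y 2 - x 2 * y 0 + x 1 * y 3 - x 3 * y 1
  else if i = 6 then x 0 * y 3 - x 3 * y 0 - x 1 * y 2 + x 2 * y 1
  else 0
@[simp] lemma MAlg.add_apply (x y : MAlg k) (i : Fin 7) : (x + y) i = x i + y i := rfl
@[simp] lemma MAlg.neg_apply (x : MAlg k) (i : Fin 7) : (-x) i = -(x i) := rfl
@[simp] lemma MAlg.sub_apply (x y : MAlg k) (i : Fin 7) : (x - y) i = x i - y i := rfl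
@[simp] lemma MAlg.smul_apply (c : k) (x : MAlg k) (i : Fin 7) : (c • x) i = c * x i := rfl
@[simp] lemma MAlg.zero_apply (i : Fin 7) : (0 : MAlg k) i = 0 := rfl
lemma MAlg.ext {x y : MAlg k} (h : ∀ i, x i = y i) : x = y := funext h
instance : LieRing (MAlg k) where
  bracket := mbr
  add_lie := by
    intro x y z; apply MAlg.ext; intro i
    show mbr (x + y) z i = mbr x z i + mbr y z i
    fin_cases i <;> simp [mbr] <;> ring
  lie_add := by
    intro x y z; apply MAlg.ext; intro i
    show mbr x (y + z) i = mbr x y i + mbr x z i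
    fin_cases i <;> simp [mbr] <;> ring
  lie_self := by
    intro x; apply MAlg.ext; intro i
    show mbr x x i = 0
    fin_cases i <;> simp [mbr] <;> ring
  leibniz_lie := by
    intro x y z; apply MAlg.ext; intro i
    show mbr x (mbr y z) i = mbr (mbr x y) z i + mbr y (mbr x z) i
    fin_cases i <;> simp [mbr]
instance : LieAlgebra k (MAlg k) where
  lie_smul := by
    intro c x y; apply MAlg.ext; intro i
    show mbr x (c • y) i = c * mbr x y i
    fin_cases i <;> simp [mbr] <;> ring
lemma MAlg.lie_def (x y : MAlg k) : ⁅x, y⁆ = mbr x y := rfl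
end MAlgDef

section MAlgBasis
variable {k : Type*} [Field k]

/-- standard basis vectors of the model algebra -/
def mE (i : Fin 7) : MAlg k := fun j => if j = i then 1 else 0

@[simp] lemma mE_apply (i j : Fin 7) : (mE i : MAlg k) j = if j = i then 1 else 0 := rfl

/-- evaluation at a coordinate, as a linear map -/
def mev (i : Fin 7) : MAlg k →ₗ[k] k where
  toFun x := x i
  map_add' _ _ := rfl
  map_smul' _ _ := rfl

@[simp] lemma mev_apply (i : Fin 7) (x : MAlg k) : mev i x = x i := rfl

lemma sum_smul_mE (x : MAlg k) : ∑ j : Fin 7, x j • (mE j : MAlg k) = x := by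
  apply MAlg.ext; intro i
  have : mev i (∑ j : Fin 7, x j • (mE j : MAlg k)) = x i := by
    rw [map_sum]
    simp [mul_ite, Finset.sum_ite_eq]
    refine (Finset.sum_eq_single i ?_ ?_).trans ?_
    · intro b _ hb; exact if_neg (Ne.symm hb)
    · intro hi; exact absurd (Finset.mem_univ i) hi
    · exact if_pos rfl
  exact this

/-- brackets of basis vectors -/
lemma mbr_E01 : ⁅(mE 0 : MAlg k), (mE 1 : MAlg k)⁆ = mE 4 := by
  apply MAlg.ext; intro i; show mbr _ _ i = _; fin_cases i <;> simp [mbr]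
lemma mbr_E02 : ⁅(mE 0 : MAlg k), (mE 2 : MAlg k)⁆ = mE 5 := by
  apply MAlg.ext; intro i; show mbr _ _ i = _; fin_cases i <;> simp [mbr]
lemma mbr_E03 : ⁅(mE 0 : MAlg k), (mE 3 : MAlg k)⁆ = mE 6 := by
  apply MAlg.ext; intro i; show mbr _ _ i = _; fin_cases i <;> simp [mbr]
lemma mbr_E23 : ⁅(mE 2 : MAlg k), (mE 3 : MAlg k)⁆ = -mE 4 := by
  apply MAlg.ext; intro i; show mbr _ _ i = (-(mE 4 : MAlg k)) i; fin_cases i <;> simp [mbr]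
lemma mbr_E13 : ⁅(mE 1 : MAlg k), (mE 3 : MAlg k)⁆ = mE 5 := by
  apply MAlg.ext; intro i; show mbr _ _ i = _; fin_cases i <;> simp [mbr]
lemma mbr_E12 : ⁅(mE 1 : MAlg k), (mE 2 : MAlg k)⁆ = -mE 6 := by
  apply MAlg.ext; intro i; show mbr _ _ i = (-(mE 6 : MAlg k)) i; fin_cases i <;> simp [mbr]

/-- the bracket of anything with a "central" element (first four coordinates zero) vanishes. -/
lemma mbr_central_right (x m : MAlg k) (h0 : m 0 = 0) (h1 : m 1 = 0) (h2 : m 2 = 0)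
    (h3 : m 3 = 0) : ⁅x, m⁆ = 0 := by
  apply MAlg.ext; intro i; show mbr _ _ i = _
  fin_cases i <;> simp [mbr, h0, h1, h2, h3]

lemma mbr_coords (x y : MAlg k) :
    ⁅x, y⁆ 0 = 0 ∧ ⁅x, y⁆ 1 = 0 ∧ ⁅x, y⁆ 2 = 0 ∧ ⁅x, y⁆ 3 = 0 := by
  refine ⟨?_, ?_, ?_, ?_⟩ <;> rfl

lemma malg_triple (x y z : MAlg k) : ⁅x, ⁅y, z⁆⁆ = 0 :=
  mbr_central_right _ _ (mbr_coords y z).1 (mbr_coords y z).2.1 (mbr_coords y z).2.2.1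
    (mbr_coords y z).2.2.2

/-- the central submodule -/
def ZSub : Submodule k (MAlg k) where
  carrier := {m | m 0 = 0 ∧ m 1 = 0 ∧ m 2 = 0 ∧ m 3 = 0}
  add_mem' := by rintro a b ⟨a0, a1, a2, a3⟩ ⟨b0, b1, b2, b3⟩; simp_all
  zero_mem' := by simp
  smul_mem' := by rintro c a ⟨a0, a1, a2, a3⟩; simp_all

lemma mem_ZSub {m : MAlg k} : m ∈ (ZSub : Submodule k (MAlg k)) ↔
    m 0 = 0 ∧ m 1 = 0 ∧ m 2 = 0 ∧ m 3 = 0 := Iff.rfl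

lemma ZSub_decomp {m : MAlg k} (h : m ∈ (ZSub : Submodule k (MAlg k))) :
    m = m 4 • mE 4 + m 5 • mE 5 + m 6 • mE 6 := by
  obtain ⟨h0, h1, h2, h3⟩ := h
  apply MAlg.ext; intro i
  fin_cases i <;> simp [h0, h1, h2, h3]
end MAlgBasis

section Aniso
variable {k : Type*} [Field k]

lemma two_squares_zero (h : ¬ ∃ a b : k, a ^ 2 + b ^ 2 = -1) (a b : k)
    (hab : a ^ 2 + b ^ 2 = 0) : a = 0 ∧ b = 0 := by
  by_cases ha : a = 0
  · subst ha
    refine ⟨rfl, ?_⟩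
    have hb : b ^ 2 = 0 := by linear_combination hab
    exact pow_eq_zero_iff (two_ne_zero : (2 : ℕ) ≠ 0) |>.mp hb
  · exfalso
    exact h ⟨b / a, 0, by field_simp; linear_combination hab⟩

lemma four_squares_zero (h : ¬ ∃ a b : k, a ^ 2 + b ^ 2 = -1) (a b c d : k)
    (habcd : a ^ 2 + b ^ 2 + c ^ 2 + d ^ 2 = 0) :
    a = 0 ∧ b = 0 ∧ c = 0 ∧ d = 0 := by
  by_cases hs : a ^ 2 + b ^ 2 = 0
  · have ht : c ^ 2 + d ^ 2 = 0 := by linear_combination habcd - hs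
    obtain ⟨ha, hb⟩ := two_squares_zero h a b hs
    obtain ⟨hc, hd⟩ := two_squares_zero h c d ht
    exact ⟨ha, hb, hc, hd⟩
  · exfalso
    apply h
    refine ⟨(c * a + d * b) / (a ^ 2 + b ^ 2), (c * b - d * a) / (a ^ 2 + b ^ 2), ?_⟩
    have hcd : c ^ 2 + d ^ 2 = -(a ^ 2 + b ^ 2) := by linear_combination habcd
    field_simp
    linear_combination (a ^ 2 + b ^ 2) * hcd

end Aniso

section MStructure
variable {k : Type*} [Field k]

/-- if the first four coordinates of `x` vanish then `ad x = 0`. -/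
lemma mbr_central_left (x y : MAlg k) (h0 : x 0 = 0) (h1 : x 1 = 0) (h2 : x 2 = 0)
    (h3 : x 3 = 0) : ⁅x, y⁆ = 0 := by
  apply MAlg.ext; intro i; show mbr _ _ i = _
  fin_cases i <;> simp [mbr, h0, h1, h2, h3]

lemma range_ad_le_ZSub (x : MAlg k) :
    LinearMap.range (LieAlgebra.ad k (MAlg k) x) ≤ ZSub := by
  rintro m ⟨y, rfl⟩
  exact mbr_coords x y

/-- Key computation: if `x` has a nonzero coordinate among the first four, then the range of
`ad x` is all of `ZSub`. -/
lemma range_ad_eq_ZSub (h : ¬ ∃ a b : k, a ^ 2 + b ^ 2 = -1) (x : MAlg k)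
    (hx : ¬ (x 0 = 0 ∧ x 1 = 0 ∧ x 2 = 0 ∧ x 3 = 0)) :
    LinearMap.range (LieAlgebra.ad k (MAlg k) x) = ZSub := by
  have hNne : x 0 ^ 2 + x 1 ^ 2 + x 2 ^ 2 + x 3 ^ 2 ≠ 0 := by
    intro h0
    exact hx (four_squares_zero h _ _ _ _ h0)
  apply le_antisymm (range_ad_le_ZSub x)
  set N : k := x 0 ^ 2 + x 1 ^ 2 + x 2 ^ 2 + x 3 ^ 2 with hN
  have h4 : (mE 4 : MAlg k) ∈ LinearMap.range (LieAlgebra.ad k (MAlg k) x) := by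
    refine ⟨(fun j => if j = 0 then -x 1 / N else if j = 1 then x 0 / N
      else if j = 2 then x 3 / N else if j = 3 then -x 2 / N else 0 : Fin 7 → k), ?_⟩
    erw [LieAlgebra.ad_apply]
    show mbr _ _ = _
    apply MAlg.ext; intro i
    fin_cases i <;> simp [mbr, mE] <;> field_simp <;> ring
  have h5 : (mE 5 : MAlg k) ∈ LinearMap.range (LieAlgebra.ad k (MAlg k) x) := by
    refine ⟨(fun j => if j = 0 then -x 2 / N else if j = 1 then -x 3 / N
      else if j = 2 then x 0 / N else if j = 3 then x 1 / N else 0 : Fin 7 → k), ?_⟩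
    erw [LieAlgebra.ad_apply]
    show mbr _ _ = _
    apply MAlg.ext; intro i
    fin_cases i <;> simp [mbr, mE] <;> field_simp <;> ring
  have h6 : (mE 6 : MAlg k) ∈ LinearMap.range (LieAlgebra.ad k (MAlg k) x) := by
    refine ⟨(fun j => if j = 0 then -x 3 / N else if j = 1 then x 2 / N
      else if j = 2 then -x 1 / N else if j = 3 then x 0 / N else 0 : Fin 7 → k), ?_⟩
    erw [LieAlgebra.ad_apply]
    show mbr _ _ = _
    apply MAlg.ext; intro i
    fin_cases i <;> simp [mbr, mE] <;> field_simp <;> ring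
  intro m hm
  rw [ZSub_decomp hm]
  exact Submodule.add_mem _ (Submodule.add_mem _ (Submodule.smul_mem _ _ h4)
    (Submodule.smul_mem _ _ h5)) (Submodule.smul_mem _ _ h6)

end MStructure

section MStructure2
variable {k : Type*} [Field k]

/-- `ZSub` is 3-dimensional. -/
noncomputable def zEquiv : (ZSub : Submodule k (MAlg k)) ≃ₗ[k] (Fin 3 → k) where
  toFun m := fun j => if j = 0 then m.1 4 else if j = 1 then m.1 5 else m.1 6
  map_add' m n := by funext j; fin_cases j <;> simp
  map_smul' c m := by funext j; fin_cases j <;> simp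
  invFun v := ⟨(fun j => if j = 4 then v 0 else if j = 5 then v 1 else if j = 6 then v 2 else 0 :
      Fin 7 → k), by refine ⟨?_, ?_, ?_, ?_⟩ <;> rfl⟩
  left_inv m := by
    obtain ⟨m, h0, h1, h2, h3⟩ := m
    apply Subtype.ext; apply MAlg.ext; intro i
    show (if (i : Fin 7) = 4 then m 4 else if (i : Fin 7) = 5 then m 5
      else if (i : Fin 7) = 6 then m 6 else 0) = m i
    fin_cases i <;> simp [h0, h1, h2, h3]
  right_inv v := by funext j; fin_cases j <;> simp

lemma finrank_ZSub : Module.finrank k (ZSub : Submodule k (MAlg k)) = 3 := by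
  rw [zEquiv.finrank_eq]
  simp [Module.finrank_fin_fun]

lemma derivedIdeal_M : ((derivedIdeal k (MAlg k)).toSubmodule : Submodule k (MAlg k)) = ZSub := by
  apply le_antisymm
  · rw [derivedIdeal, LieSubmodule.lieIdeal_oper_eq_linear_span, Submodule.span_le]
    rintro m ⟨x, n, rfl⟩
    exact mbr_coords _ _
  · intro m hm
    rw [ZSub_decomp hm]
    have h4 : (mE 4 : MAlg k) ∈ derivedIdeal k (MAlg k) := by
      rw [← mbr_E01]; exact lie_mem_derivedIdeal k (MAlg k) _ _
    have h5 : (mE 5 : MAlg k) ∈ derivedIdeal k (MAlg k) := by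
      rw [← mbr_E02]; exact lie_mem_derivedIdeal k (MAlg k) _ _
    have h6 : (mE 6 : MAlg k) ∈ derivedIdeal k (MAlg k) := by
      rw [← mbr_E03]; exact lie_mem_derivedIdeal k (MAlg k) _ _
    exact Submodule.add_mem _ (Submodule.add_mem _ (Submodule.smul_mem _ _ h4)
      (Submodule.smul_mem _ _ h5)) (Submodule.smul_mem _ _ h6)

lemma mem_derivedIdeal_M_iff (x : MAlg k) :
    x ∈ derivedIdeal k (MAlg k) ↔ (x 0 = 0 ∧ x 1 = 0 ∧ x 2 = 0 ∧ x 3 = 0) := by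
  rw [show (x ∈ derivedIdeal k (MAlg k)) ↔ x ∈ (derivedIdeal k (MAlg k)).toSubmodule from Iff.rfl,
    derivedIdeal_M]
  exact Iff.rfl

lemma isCamina_M (h : ¬ ∃ a b : k, a ^ 2 + b ^ 2 = -1) : IsCamina k (MAlg k) := by
  intro x hx
  rw [mem_derivedIdeal_M_iff] at hx
  rw [range_ad_eq_ZSub h x hx, derivedIdeal_M]

lemma ad_eq_zero_of_central (x : MAlg k) (hx : x 0 = 0 ∧ x 1 = 0 ∧ x 2 = 0 ∧ x 3 = 0) :
    LieAlgebra.ad k (MAlg k) x = 0 := by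
  ext y
  exact mbr_central_left x y hx.1 hx.2.1 hx.2.2.1 hx.2.2.2

lemma breadth_M (h : ¬ ∃ a b : k, a ^ 2 + b ^ 2 = -1) :
    Set.range (breadth k (MAlg k)) = {0, 3} := by
  ext n
  constructor
  · rintro ⟨x, rfl⟩
    by_cases hx : x 0 = 0 ∧ x 1 = 0 ∧ x 2 = 0 ∧ x 3 = 0
    · left
      rw [breadth, ad_eq_zero_of_central x hx, LinearMap.range_zero]
      exact finrank_bot k _
    · right
      rw [breadth, range_ad_eq_ZSub h x hx, finrank_ZSub]
      rfl
  · rintro (rfl | rfl)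
    · refine ⟨0, ?_⟩
      rw [breadth, ad_eq_zero_of_central 0 (by simp), LinearMap.range_zero]
      exact finrank_bot k _
    · refine ⟨mE 0, ?_⟩
      rw [breadth, range_ad_eq_ZSub h (mE 0) (by simp), finrank_ZSub]

end MStructure2

section GenericLie
variable (k : Type*) [Field k]
variable {L : Type*} [LieRing L] [LieAlgebra k L]
variable {M' : Type*} [LieRing M'] [LieAlgebra k M']

/-- If all triple brackets vanish, the second term of the lower central series is trivial. -/
lemma lcs_two_eq_bot_of_triple (h : ∀ x y z : L, ⁅x, ⁅y, z⁆⁆ = 0) :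
    LieModule.lowerCentralSeries k L L 2 = ⊥ := by
  have h1 : LieModule.lowerCentralSeries k L L 1 ≤
      LieModule.maxTrivSubmodule k L L := by
    rw [show (1 : ℕ) = 0 + 1 from rfl, LieModule.lowerCentralSeries_succ,
      LieModule.lowerCentralSeries_zero, LieSubmodule.lieIdeal_oper_eq_span,
      LieSubmodule.lieSpan_le]
    rintro m ⟨x, n, rfl⟩
    intro z
    exact h z x n
  rw [show (2 : ℕ) = 1 + 1 from rfl, LieModule.lowerCentralSeries_succ,
    LieSubmodule.lieIdeal_oper_eq_span, ← le_bot_iff, LieSubmodule.lieSpan_le]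
  rintro m ⟨x, n, rfl⟩
  have := h1 n.2
  simp only [LieSubmodule.bot_coe, Set.mem_singleton_iff]
  exact this x

/-- The quotient map by a Lie ideal, as a morphism of Lie algebras. -/
def qmkHom (I : LieIdeal k L) : L →ₗ⁅k⁆ L ⧸ I :=
  { I.toSubmodule.mkQ with
    map_lie' := fun {_ _} => rfl }

@[simp] lemma qmkHom_apply (I : LieIdeal k L) (x : L) :
    qmkHom k I x = LieSubmodule.Quotient.mk (N := I) x := rfl

lemma qmkHom_surjective (I : LieIdeal k L) : Function.Surjective (qmkHom k I) :=
  Submodule.Quotient.mk_surjective _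

/-- Lift a Lie algebra morphism to the quotient by an ideal contained in its kernel. -/
def lieQuotLift (I : LieIdeal k L) (f : L →ₗ⁅k⁆ M') (hf : ∀ x ∈ I, f x = 0) :
    (L ⧸ I) →ₗ⁅k⁆ M' :=
  { Submodule.liftQ I.toSubmodule f.toLinearMap (fun x hx => by
      rw [LinearMap.mem_ker]; exact hf x hx) with
    map_lie' := by
      rintro ⟨x⟩ ⟨y⟩
      exact f.map_lie x y }

@[simp] lemma lieQuotLift_mk (I : LieIdeal k L) (f : L →ₗ⁅k⁆ M') (hf : ∀ x ∈ I, f x = 0)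
    (x : L) : lieQuotLift k I f hf (LieSubmodule.Quotient.mk (N := I) x) = f x := rfl

/-- Image of a lie-spanning set under a surjective morphism is lie-spanning. -/
lemma lieSpan_image_of_surjective (f : L →ₗ⁅k⁆ M') (hf : Function.Surjective f)
    (s : Set L) (hs : LieSubalgebra.lieSpan k L s = ⊤) :
    LieSubalgebra.lieSpan k M' (f '' s) = ⊤ := by
  rw [eq_top_iff]
  intro m _
  obtain ⟨x, rfl⟩ := hf m
  have hx : x ∈ LieSubalgebra.comap f (LieSubalgebra.lieSpan k M' (f '' s)) := by
    have : LieSubalgebra.lieSpan k L s ≤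
        LieSubalgebra.comap f (LieSubalgebra.lieSpan k M' (f '' s)) := by
      rw [LieSubalgebra.lieSpan_le]
      intro y hy
      have : f y ∈ LieSubalgebra.lieSpan k M' (⇑f '' s) :=
        LieSubalgebra.subset_lieSpan (Set.mem_image_of_mem f hy)
      exact this
    exact this (hs ▸ LieSubalgebra.mem_top x)
  exact hx

end GenericLie

section MGen
variable {k : Type*} [Field k]

/-- projection onto the first four coordinates -/
def mproj : MAlg k →ₗ[k] (Fin 4 → k) where
  toFun m := fun j => m ⟨j.1, by omega⟩
  map_add' _ _ := rfl
  map_smul' _ _ := rfl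

lemma mproj_surjective : Function.Surjective (mproj (k := k)) := by
  intro v
  refine ⟨(fun j => if h : j.1 < 4 then v ⟨j.1, h⟩ else 0 : Fin 7 → k), ?_⟩
  funext j
  show (if h : (j : ℕ) < 4 then v ⟨j.1, h⟩ else 0) = v j
  rw [dif_pos j.2]

lemma mproj_lie (x y : MAlg k) : mproj ⁅x, y⁆ = 0 := by
  funext j
  have h := mbr_coords x y
  fin_cases j <;> simp [mproj] <;> [exact h.1; exact h.2.1; exact h.2.2.1; exact h.2.2.2]

lemma M_gen_lower (t : Finset (MAlg k)) (ht : LieSubalgebra.lieSpan k (MAlg k) ↑t = ⊤) :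
    4 ≤ t.card := by
  classical
  set W : Submodule k (Fin 4 → k) := Submodule.span k (mproj '' ↑t) with hW
  have hS : ∀ m : MAlg k, mproj m ∈ W := by
    have hle : LieSubalgebra.lieSpan k (MAlg k) ↑t ≤
        { (W.comap (mproj : MAlg k →ₗ[k] (Fin 4 → k))) with
          lie_mem' := by
            intro x y _ _
            show mproj ⁅x, y⁆ ∈ W
            rw [mproj_lie]
            exact W.zero_mem } := by
      rw [LieSubalgebra.lieSpan_le]
      intro y hy
      exact Submodule.subset_span (Set.mem_image_of_mem _ hy)
    intro m
    exact hle (ht ▸ LieSubalgebra.mem_top m)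
  have hWtop : W = ⊤ := by
    rw [eq_top_iff]
    intro v _
    obtain ⟨m, rfl⟩ := mproj_surjective v
    exact hS m
  have hspan : Submodule.span k ((t.image (mproj : MAlg k →ₗ[k] (Fin 4 → k))) :
      Set (Fin 4 → k)) = ⊤ := by
    rw [Finset.coe_image, ← hW, hWtop]
  have hcard : Module.finrank k
      (Submodule.span k ((t.image (mproj : MAlg k →ₗ[k] (Fin 4 → k))) : Set (Fin 4 → k)))
      ≤ (t.image mproj).card := by
    simpa [Set.finrank] using
      finrank_span_finset_le_card (R := k) (t.image (mproj : MAlg k →ₗ[k] (Fin 4 → k)))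
  rw [hspan, finrank_top, Module.finrank_fin_fun] at hcard
  exact hcard.trans (Finset.card_image_le)

/-- the embedding of the four generators -/
noncomputable def mGenFinset (k : Type*) [Field k] : Finset (MAlg k) :=
  (Finset.univ : Finset (Fin 4)).map
    ⟨fun i => mE ⟨i.1, by omega⟩, by
      intro i j hij
      by_contra hne
      have hne7 : (⟨i.1, by omega⟩ : Fin 7) ≠ (⟨j.1, by omega⟩ : Fin 7) := by
        intro hc
        exact hne (Fin.ext (congrArg (Fin.val : Fin 7 → ℕ) hc))
      have h2 : (mE (⟨i.1, by omega⟩ : Fin 7) : MAlg k) ⟨i.1, by omega⟩ =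
          (mE (⟨j.1, by omega⟩ : Fin 7) : MAlg k) ⟨i.1, by omega⟩ := congrFun hij _
      rw [mE_apply, mE_apply, if_pos rfl, if_neg hne7] at h2
      exact one_ne_zero h2⟩

lemma mGenFinset_card : (mGenFinset k).card = 4 := by
  simp [mGenFinset]

lemma mGenFinset_coe : ((mGenFinset k : Finset (MAlg k)) : Set (MAlg k)) =
    Set.range (fun i : Fin 4 => (mE ⟨i.1, by omega⟩ : MAlg k)) := by
  simp [mGenFinset, Set.range_comp]
  rfl

lemma mGen_span : LieSubalgebra.lieSpan k (MAlg k) ↑(mGenFinset k) = ⊤ := by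
  rw [eq_top_iff]
  intro m _
  set S := LieSubalgebra.lieSpan k (MAlg k) ↑(mGenFinset k) with hS
  have hmem : ∀ i : Fin 4, mE (⟨i.1, by omega⟩ : Fin 7) ∈ S := by
    intro i
    apply LieSubalgebra.subset_lieSpan
    rw [mGenFinset_coe]
    exact ⟨i, rfl⟩
  have h0 : (mE 0 : MAlg k) ∈ S := hmem 0
  have h1 : (mE 1 : MAlg k) ∈ S := hmem 1
  have h2 : (mE 2 : MAlg k) ∈ S := hmem 2
  have h3 : (mE 3 : MAlg k) ∈ S := hmem 3
  have h4 : (mE 4 : MAlg k) ∈ S := by rw [← mbr_E01]; exact S.lie_mem h0 h1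
  have h5 : (mE 5 : MAlg k) ∈ S := by rw [← mbr_E02]; exact S.lie_mem h0 h2
  have h6 : (mE 6 : MAlg k) ∈ S := by rw [← mbr_E03]; exact S.lie_mem h0 h3
  have hall : ∀ j : Fin 7, (mE j : MAlg k) ∈ S := by
    intro j
    fin_cases j <;> assumption
  rw [← sum_smul_mE m]
  exact sum_mem (fun j _ => S.smul_mem _ (hall j))

end MGen


/-! ### the morphism from the free nilpotent algebra to the model algebra -/

section Maps
variable (k : Type*) [Field k]

/-- The quotient algebra in the theorem. -/
abbrev QAlg := FreeNilp k 2 4 ⧸ idealK k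

/-- generator images in `QAlg` -/
noncomputable def qg (i : Fin 4) : QAlg k :=
  LieSubmodule.Quotient.mk (N := idealK k) (gen k 2 4 i)

/-- images of the four generators in `MAlg` -/
def mg : Fin 4 → MAlg k := fun i =>
  if i = 0 then mE 0 else if i = 1 then mE 1 else if i = 2 then mE 2 else mE 3

noncomputable def f0 : FreeLieAlgebra k (Fin 4) →ₗ⁅k⁆ MAlg k :=
  FreeLieAlgebra.lift k (mg k)

@[simp] lemma f0_of (i : Fin 4) : f0 k (FreeLieAlgebra.of k i) = mg k i :=
  FreeLieAlgebra.lift_of_apply _ _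

lemma f0_lcs2 : ∀ x ∈ LieModule.lowerCentralSeries k (FreeLieAlgebra k (Fin 4))
    (FreeLieAlgebra k (Fin 4)) 2, f0 k x = 0 := by
  intro x hx
  have h1 : f0 k x ∈ LieIdeal.map (f0 k) (LieModule.lowerCentralSeries k
      (FreeLieAlgebra k (Fin 4)) (FreeLieAlgebra k (Fin 4)) 2) :=
    LieIdeal.mem_map hx
  have h2 := LieIdeal.map_lowerCentralSeries_le (f := f0 k) 2
  have h3 : LieModule.lowerCentralSeries k (MAlg k) (MAlg k) 2 = ⊥ :=
    lcs_two_eq_bot_of_triple k malg_triple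
  have := h2 h1
  rw [h3] at this
  simpa using this

noncomputable def f1 : FreeNilp k 2 4 →ₗ⁅k⁆ MAlg k :=
  lieQuotLift k _ (f0 k) (f0_lcs2 k)

@[simp] lemma f1_gen (i : Fin 4) : f1 k (gen k 2 4 i) = mg k i := by
  rw [gen]
  exact (lieQuotLift_mk k _ _ _ _).trans (f0_of k i)

@[simp] lemma mg0 : mg k 0 = mE 0 := by simp [mg]
@[simp] lemma mg1 : mg k 1 = mE 1 := by simp [mg]
@[simp] lemma mg2 : mg k 2 = mE 2 := by simp [mg]
@[simp] lemma mg3 : mg k 3 = mE 3 := by simp [mg]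

lemma idealK_le_ker : ∀ x ∈ idealK k, f1 k x = 0 := by
  have : idealK k ≤ (f1 k).ker := by
    rw [idealK, LieSubmodule.lieSpan_le]
    intro x hx
    rcases hx with h | h | h <;> subst h <;>
        refine (LieHom.mem_ker (f := f1 k)).mpr ?_
    · rw [map_add, LieHom.map_lie, LieHom.map_lie, f1_gen, f1_gen, f1_gen, f1_gen,
        mg0, mg1, mg2, mg3, mbr_E01, mbr_E23]
      abel
    · rw [map_sub, LieHom.map_lie, LieHom.map_lie, f1_gen, f1_gen, f1_gen, f1_gen,
        mg0, mg1, mg2, mg3, mbr_E02, mbr_E13]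
      abel
    · rw [map_add, LieHom.map_lie, LieHom.map_lie, f1_gen, f1_gen, f1_gen, f1_gen,
        mg0, mg1, mg2, mg3, mbr_E03, mbr_E12]
      abel
  intro x hx
  exact (LieHom.mem_ker).mp (this hx)

noncomputable def f2 : QAlg k →ₗ⁅k⁆ MAlg k :=
  lieQuotLift k _ (f1 k) (idealK_le_ker k)

@[simp] lemma f2_qg (i : Fin 4) : f2 k (qg k i) = mg k i := by
  rw [qg]
  exact (lieQuotLift_mk k _ _ _ _).trans (f1_gen k i)

/-! triple brackets vanish in `FreeNilp` and in `QAlg` -/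

lemma freeNilp_triple (x y z : FreeNilp k 2 4) : ⁅x, ⁅y, z⁆⁆ = 0 := by
  obtain ⟨x⟩ := x; obtain ⟨y⟩ := y; obtain ⟨z⟩ := z
  show LieSubmodule.Quotient.mk
    (N := LieModule.lowerCentralSeries k (FreeLieAlgebra k (Fin 4)) (FreeLieAlgebra k (Fin 4)) 2)
    ⁅x, ⁅y, z⁆⁆ = 0
  rw [LieSubmodule.Quotient.mk_eq_zero']
  have hyz : ⁅y, z⁆ ∈ LieModule.lowerCentralSeries k (FreeLieAlgebra k (Fin 4))
      (FreeLieAlgebra k (Fin 4)) 1 := by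
    rw [show (1 : ℕ) = 0 + 1 from rfl, LieModule.lowerCentralSeries_succ,
      LieModule.lowerCentralSeries_zero]
    exact LieSubmodule.lie_mem_lie (LieSubmodule.mem_top y) (LieSubmodule.mem_top z)
  rw [show (2 : ℕ) = 1 + 1 from rfl, LieModule.lowerCentralSeries_succ]
  exact LieSubmodule.lie_mem_lie (LieSubmodule.mem_top x) hyz

lemma qAlg_triple (x y z : QAlg k) : ⁅x, ⁅y, z⁆⁆ = 0 := by
  obtain ⟨x⟩ := x; obtain ⟨y⟩ := y; obtain ⟨z⟩ := z
  show LieSubmodule.Quotient.mk (N := idealK k) ⁅x, ⁅y, z⁆⁆ = 0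
  rw [freeNilp_triple]
  exact Submodule.Quotient.mk_zero _

lemma qAlg_triple' (x y z : QAlg k) : ⁅⁅x, y⁆, z⁆ = 0 := by
  rw [← lie_skew, qAlg_triple, neg_zero]

end Maps

section Chi
variable (k : Type*) [Field k]

noncomputable def chiLin : MAlg k →ₗ[k] QAlg k where
  toFun x := x 0 • qg k 0 + x 1 • qg k 1 + x 2 • qg k 2 + x 3 • qg k 3
    + x 4 • ⁅qg k 0, qg k 1⁆ + x 5 • ⁅qg k 0, qg k 2⁆ + x 6 • ⁅qg k 0, qg k 3⁆
  map_add' x y := by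
    simp only [MAlg.add_apply, add_smul]
    abel
  map_smul' c x := by
    simp only [MAlg.smul_apply, RingHom.id_apply, mul_smul, smul_add]

lemma chiLin_apply (x : MAlg k) : chiLin k x =
    x 0 • qg k 0 + x 1 • qg k 1 + x 2 • qg k 2 + x 3 • qg k 3
    + x 4 • ⁅qg k 0, qg k 1⁆ + x 5 • ⁅qg k 0, qg k 2⁆ + x 6 • ⁅qg k 0, qg k 3⁆ := rfl

/-- relations coming from the ideal -/
lemma qg_sum1 : ⁅qg k 0, qg k 1⁆ + ⁅qg k 2, qg k 3⁆ = 0 := by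
  have h : qmkHom k (idealK k) (⁅gen k 2 4 0, gen k 2 4 1⁆ + ⁅gen k 2 4 2, gen k 2 4 3⁆) = 0 := by
    rw [qmkHom_apply, LieSubmodule.Quotient.mk_eq_zero']
    exact LieSubmodule.subset_lieSpan (by left; rfl)
  rw [map_add, LieHom.map_lie, LieHom.map_lie] at h
  exact h

lemma qg_sum2 : ⁅qg k 0, qg k 2⁆ - ⁅qg k 1, qg k 3⁆ = 0 := by
  have h : qmkHom k (idealK k) (⁅gen k 2 4 0, gen k 2 4 2⁆ - ⁅gen k 2 4 1, gen k 2 4 3⁆) = 0 := by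
    rw [qmkHom_apply, LieSubmodule.Quotient.mk_eq_zero']
    exact LieSubmodule.subset_lieSpan (by right; left; rfl)
  rw [map_sub, LieHom.map_lie, LieHom.map_lie] at h
  exact h

lemma qg_sum3 : ⁅qg k 0, qg k 3⁆ + ⁅qg k 1, qg k 2⁆ = 0 := by
  have h : qmkHom k (idealK k) (⁅gen k 2 4 0, gen k 2 4 3⁆ + ⁅gen k 2 4 1, gen k 2 4 2⁆) = 0 := by
    rw [qmkHom_apply, LieSubmodule.Quotient.mk_eq_zero']
    exact LieSubmodule.subset_lieSpan (by right; right; rfl)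
  rw [map_add, LieHom.map_lie, LieHom.map_lie] at h
  exact h

lemma q10 : ⁅qg k 1, qg k 0⁆ = -⁅qg k 0, qg k 1⁆ := by rw [← lie_skew]
lemma q20 : ⁅qg k 2, qg k 0⁆ = -⁅qg k 0, qg k 2⁆ := by rw [← lie_skew]
lemma q30 : ⁅qg k 3, qg k 0⁆ = -⁅qg k 0, qg k 3⁆ := by rw [← lie_skew]
lemma q23 : ⁅qg k 2, qg k 3⁆ = -⁅qg k 0, qg k 1⁆ :=
  eq_neg_of_add_eq_zero_left (by rw [add_comm]; exact qg_sum1 k)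
lemma q32 : ⁅qg k 3, qg k 2⁆ = ⁅qg k 0, qg k 1⁆ := by
  rw [← lie_skew, q23, neg_neg]
lemma q13 : ⁅qg k 1, qg k 3⁆ = ⁅qg k 0, qg k 2⁆ :=
  (sub_eq_zero.mp (qg_sum2 k)).symm
lemma q31 : ⁅qg k 3, qg k 1⁆ = -⁅qg k 0, qg k 2⁆ := by
  rw [← lie_skew, q13]
lemma q12 : ⁅qg k 1, qg k 2⁆ = -⁅qg k 0, qg k 3⁆ :=
  eq_neg_of_add_eq_zero_left (by rw [add_comm]; exact qg_sum3 k)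
lemma q21 : ⁅qg k 2, qg k 1⁆ = ⁅qg k 0, qg k 3⁆ := by
  rw [← lie_skew, q12, neg_neg]

lemma chi_map_lie (x y : MAlg k) :
    chiLin k ⁅x, y⁆ = ⁅chiLin k x, chiLin k y⁆ := by
  have e0 : ⁅x, y⁆ 0 = 0 := rfl
  have e1 : ⁅x, y⁆ 1 = 0 := rfl
  have e2 : ⁅x, y⁆ 2 = 0 := rfl
  have e3 : ⁅x, y⁆ 3 = 0 := rfl
  have e4 : ⁅x, y⁆ 4 = x 0 * y 1 - x 1 * y 0 - x 2 * y 3 + x 3 * y 2 := rfl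
  have e5 : ⁅x, y⁆ 5 = x 0 * y 2 - x 2 * y 0 + x 1 * y 3 - x 3 * y 1 := rfl
  have e6 : ⁅x, y⁆ 6 = x 0 * y 3 - x 3 * y 0 - x 1 * y 2 + x 2 * y 1 := rfl
  rw [chiLin_apply, chiLin_apply, chiLin_apply, e0, e1, e2, e3, e4, e5, e6]
  simp only [zero_smul, zero_add]
  simp only [lie_add, add_lie, lie_smul, smul_lie, qAlg_triple, qAlg_triple', smul_zero,
    zero_add, add_zero, lie_zero, zero_lie, lie_self, smul_neg, smul_smul,
    q10 k, q20 k, q30 k, q23 k, q32 k, q13 k, q31 k, q12 k, q21 k]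
  module

noncomputable def chiHom : MAlg k →ₗ⁅k⁆ QAlg k :=
  { chiLin k with map_lie' := fun {x y} => chi_map_lie k x y }

lemma chiHom_apply (x : MAlg k) : chiHom k x = chiLin k x := rfl

lemma chiHom_mg (i : Fin 4) : chiHom k (mg k i) = qg k i := by
  fin_cases i
  · show chiHom k (mg k 0) = qg k 0
    rw [mg0, chiHom_apply, chiLin_apply]; simp [mE]
  · show chiHom k (mg k 1) = qg k 1
    rw [mg1, chiHom_apply, chiLin_apply]; simp [mE]
  · show chiHom k (mg k 2) = qg k 2
    rw [mg2, chiHom_apply, chiLin_apply]; simp [mE]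
  · show chiHom k (mg k 3) = qg k 3
    rw [mg3, chiHom_apply, chiLin_apply]; simp [mE]

lemma chi_f2 (q : QAlg k) : chiHom k (f2 k q) = q := by
  have hcomp : ((chiHom k).comp (f2 k)).comp ((qmkHom k (idealK k)).comp
      (qmkHom k (LieModule.lowerCentralSeries k (FreeLieAlgebra k (Fin 4))
        (FreeLieAlgebra k (Fin 4)) 2))) =
      (qmkHom k (idealK k)).comp (qmkHom k (LieModule.lowerCentralSeries k
        (FreeLieAlgebra k (Fin 4)) (FreeLieAlgebra k (Fin 4)) 2)) := by
    apply FreeLieAlgebra.hom_ext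
    intro i
    show chiHom k (f2 k (qg k i)) = qg k i
    rw [f2_qg, chiHom_mg]
  obtain ⟨p, rfl⟩ := qmkHom_surjective k (idealK k) q
  obtain ⟨w, rfl⟩ := qmkHom_surjective k _ p
  exact DFunLike.congr_fun hcomp w

lemma f2_inj : Function.Injective (f2 k) := by
  intro a b hab
  have ha := chi_f2 k a
  rw [hab, chi_f2 k b] at ha
  exact ha.symm

/-- preimages of basis vectors -/
noncomputable def qpre : Fin 7 → QAlg k := fun j =>
  if j = 0 then qg k 0 else if j = 1 then qg k 1 else if j = 2 then qg k 2
  else if j = 3 then qg k 3 else if j = 4 then ⁅qg k 0, qg k 1⁆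
  else if j = 5 then ⁅qg k 0, qg k 2⁆ else ⁅qg k 0, qg k 3⁆

lemma f2_qpre (j : Fin 7) : f2 k (qpre k j) = mE j := by
  fin_cases j
  · show f2 k (qg k 0) = mE 0
    rw [f2_qg, mg0]
  · show f2 k (qg k 1) = mE 1
    rw [f2_qg, mg1]
  · show f2 k (qg k 2) = mE 2
    rw [f2_qg, mg2]
  · show f2 k (qg k 3) = mE 3
    rw [f2_qg, mg3]
  · show f2 k ⁅qg k 0, qg k 1⁆ = mE 4
    rw [LieHom.map_lie, f2_qg, f2_qg, mg0, mg1, mbr_E01]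
  · show f2 k ⁅qg k 0, qg k 2⁆ = mE 5
    rw [LieHom.map_lie, f2_qg, f2_qg, mg0, mg2, mbr_E02]
  · show f2 k ⁅qg k 0, qg k 3⁆ = mE 6
    rw [LieHom.map_lie, f2_qg, f2_qg, mg0, mg3, mbr_E03]

lemma f2_surj : Function.Surjective (f2 k) := by
  intro x
  refine ⟨∑ j : Fin 7, x j • qpre k j, ?_⟩
  have : f2 k (∑ j : Fin 7, x j • qpre k j) =
      ∑ j : Fin 7, x j • f2 k (qpre k j) := by
    rw [show (f2 k (∑ j : Fin 7, x j • qpre k j)) =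
      (f2 k).toLinearMap (∑ j : Fin 7, x j • qpre k j) from rfl, map_sum]
    simp only [LinearMap.map_smul]
    rfl
  rw [this]
  simp only [f2_qpre]
  exact sum_smul_mE x

noncomputable def eqv : QAlg k ≃ₗ⁅k⁆ MAlg k :=
  LieEquiv.ofBijective (f2 k) ⟨f2_inj k, f2_surj k⟩

lemma eqv_apply (q : QAlg k) : eqv k q = f2 k q := rfl

end Chi

section Transfer
variable (k : Type*) [Field k]

lemma range_ad_f2 (x : QAlg k) :
    LinearMap.range (LieAlgebra.ad k (MAlg k) (f2 k x)) =
      Submodule.map ((f2 k) : QAlg k →ₗ[k] MAlg k)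
        (LinearMap.range (LieAlgebra.ad k (QAlg k) x)) := by
  ext m
  simp only [LinearMap.mem_range, Submodule.mem_map, LieAlgebra.ad_apply]
  constructor
  · rintro ⟨y, rfl⟩
    obtain ⟨y', rfl⟩ := f2_surj k y
    exact ⟨⁅x, y'⁆, ⟨y', rfl⟩, by exact LieHom.map_lie (f2 k) x y'⟩
  · rintro ⟨m', ⟨y, rfl⟩, rfl⟩
    exact ⟨f2 k y, by exact (LieHom.map_lie (f2 k) x y).symm⟩

lemma breadth_transfer (x : QAlg k) :
    breadth k (MAlg k) (f2 k x) = breadth k (QAlg k) x := by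
  rw [breadth, breadth, range_ad_f2]
  have : Submodule.map ((f2 k) : QAlg k →ₗ[k] MAlg k)
      (LinearMap.range (LieAlgebra.ad k (QAlg k) x)) =
      Submodule.map ((eqv k).toLinearEquiv : QAlg k →ₗ[k] MAlg k)
      (LinearMap.range (LieAlgebra.ad k (QAlg k) x)) := rfl
  rw [this, LinearEquiv.finrank_map_eq]

lemma derived_Q_map :
    Submodule.map ((f2 k) : QAlg k →ₗ[k] MAlg k) (derivedIdeal k (QAlg k)).toSubmodule =
      (derivedIdeal k (MAlg k)).toSubmodule := by
  rw [derivedIdeal, derivedIdeal, LieSubmodule.lieIdeal_oper_eq_linear_span,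
    LieSubmodule.lieIdeal_oper_eq_linear_span, Submodule.map_span]
  congr 1
  ext m
  constructor
  · rintro ⟨m', ⟨x, n, rfl⟩, rfl⟩
    exact ⟨⟨f2 k x, LieSubmodule.mem_top _⟩, ⟨f2 k (n : QAlg k), LieSubmodule.mem_top _⟩,
      by exact (LieHom.map_lie (f2 k) x n).symm⟩
  · rintro ⟨x, n, rfl⟩
    obtain ⟨x', hx'⟩ := f2_surj k (x : MAlg k)
    obtain ⟨n', hn'⟩ := f2_surj k (n : MAlg k)
    refine ⟨⁅x', n'⁆, ⟨⟨x', LieSubmodule.mem_top _⟩, ⟨n', LieSubmodule.mem_top _⟩, rfl⟩, ?_⟩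
    show f2 k ⁅x', n'⁆ = _
    rw [LieHom.map_lie, hx', hn']

lemma mem_derived_transfer (x : QAlg k) :
    x ∈ derivedIdeal k (QAlg k) ↔ f2 k x ∈ derivedIdeal k (MAlg k) := by
  constructor
  · intro hx
    have : f2 k x ∈ Submodule.map ((f2 k) : QAlg k →ₗ[k] MAlg k)
        (derivedIdeal k (QAlg k)).toSubmodule := ⟨x, hx, rfl⟩
    rw [derived_Q_map] at this
    exact this
  · intro hx
    have : f2 k x ∈ Submodule.map ((f2 k) : QAlg k →ₗ[k] MAlg k)
        (derivedIdeal k (QAlg k)).toSubmodule := by rw [derived_Q_map]; exact hx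
    obtain ⟨y, hy, hyx⟩ := this
    rwa [← f2_inj k hyx]

lemma isCamina_Q (h : ¬ ∃ a b : k, a ^ 2 + b ^ 2 = -1) : IsCamina k (QAlg k) := by
  intro x hx
  have hxm : f2 k x ∉ derivedIdeal k (MAlg k) := fun hc => hx ((mem_derived_transfer k x).mpr hc)
  have hM := isCamina_M h (f2 k x) hxm
  rw [range_ad_f2, ← derived_Q_map] at hM
  have hinj : Function.Injective ((f2 k) : QAlg k →ₗ[k] MAlg k) := f2_inj k
  exact Submodule.map_injective_of_injective hinj hM

lemma hasBreadthType_Q (h : ¬ ∃ a b : k, a ^ 2 + b ^ 2 = -1) :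
    HasBreadthType k (QAlg k) {0, 3} := by
  rw [HasBreadthType, ← breadth_M h]
  ext n
  constructor
  · rintro ⟨x, rfl⟩
    exact ⟨f2 k x, breadth_transfer k x⟩
  · rintro ⟨m, rfl⟩
    obtain ⟨x, rfl⟩ := f2_surj k m
    exact ⟨x, (breadth_transfer k x).symm⟩

lemma lcs_one_eq (L : Type*) [LieRing L] [LieAlgebra k L] :
    LieModule.lowerCentralSeries k L L 1 = ⁅(⊤ : LieIdeal k L), (⊤ : LieIdeal k L)⁆ := by
  rw [show (1 : ℕ) = 0 + 1 from rfl, LieModule.lowerCentralSeries_succ,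
    LieModule.lowerCentralSeries_zero]

lemma mE0_ne_zero : (mE 0 : MAlg k) ≠ 0 := by
  intro hc
  have := congrArg (mev 0) hc
  simp only [mev_apply, mE_apply, if_pos rfl, MAlg.zero_apply] at this
  exact one_ne_zero this

lemma mE4_ne_zero : (mE 4 : MAlg k) ≠ 0 := by
  intro hc
  have := congrArg (mev 4) hc
  simp only [mev_apply, mE_apply, if_pos rfl, MAlg.zero_apply] at this
  exact one_ne_zero this

lemma nilpotentClass_Q : IsNilpotentOfClass k (QAlg k) 2 := by
  constructor
  · exact lcs_two_eq_bot_of_triple k (qAlg_triple k)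
  · intro b hb
    interval_cases b
    · rw [LieModule.lowerCentralSeries_zero]
      intro hc
      have h0 : qg k 0 ∈ (⊥ : LieIdeal k (QAlg k)) := hc ▸ LieSubmodule.mem_top _
      rw [LieSubmodule.mem_bot] at h0
      apply mE0_ne_zero (k := k)
      rw [← mg0, ← f2_qg, h0, map_zero]
    · intro hc
      have hc' : (⁅(⊤ : LieIdeal k (QAlg k)), (⊤ : LieIdeal k (QAlg k))⁆ :
          LieIdeal k (QAlg k)) = ⊥ := (lcs_one_eq k (QAlg k)).symm.trans hc
      have hmem : ⁅qg k 0, qg k 1⁆ ∈ (⊥ : LieIdeal k (QAlg k)) :=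
        (le_of_eq hc')
          (LieSubmodule.lie_mem_lie (LieSubmodule.mem_top _) (LieSubmodule.mem_top _))
      rw [LieSubmodule.mem_bot] at hmem
      apply mE4_ne_zero (k := k)
      rw [← mbr_E01, ← mg0 k, ← mg1 k, ← f2_qg, ← f2_qg, ← LieHom.map_lie, hmem,
        map_zero]

lemma qg_inj : Function.Injective (qg k) := by
  intro i j hij
  have h2 : mg k i = mg k j := by rw [← f2_qg, ← f2_qg, hij]
  have h3 : ∀ l : Fin 4, mg k l = mE ⟨l.1, by omega⟩ := by
    intro l; fin_cases l <;> rfl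
  rw [h3 i, h3 j] at h2
  by_contra hne
  have hne7 : (⟨i.1, by omega⟩ : Fin 7) ≠ (⟨j.1, by omega⟩ : Fin 7) := by
    intro hc
    exact hne (Fin.ext (congrArg (Fin.val : Fin 7 → ℕ) hc))
  have h4 : (mE (⟨i.1, by omega⟩ : Fin 7) : MAlg k) ⟨i.1, by omega⟩ =
      (mE (⟨j.1, by omega⟩ : Fin 7) : MAlg k) ⟨i.1, by omega⟩ := by rw [h2]
  rw [mE_apply, mE_apply, if_pos rfl, if_neg hne7] at h4
  exact one_ne_zero h4

lemma qg_span : LieSubalgebra.lieSpan k (QAlg k) (Set.range (qg k)) = ⊤ := by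
  set S := LieSubalgebra.lieSpan k (QAlg k) (Set.range (qg k)) with hS
  let F : FreeLieAlgebra k (Fin 4) →ₗ⁅k⁆ S :=
    FreeLieAlgebra.lift k (fun i => ⟨qg k i, LieSubalgebra.subset_lieSpan ⟨i, rfl⟩⟩)
  have hcomp : S.incl.comp F = (qmkHom k (idealK k)).comp
      (qmkHom k (LieModule.lowerCentralSeries k (FreeLieAlgebra k (Fin 4))
        (FreeLieAlgebra k (Fin 4)) 2)) := by
    apply FreeLieAlgebra.hom_ext
    intro i
    show S.incl (F (FreeLieAlgebra.of k i)) = qg k i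
    rw [show F (FreeLieAlgebra.of k i) =
      (⟨qg k i, LieSubalgebra.subset_lieSpan ⟨i, rfl⟩⟩ : S) from FreeLieAlgebra.lift_of_apply _ _]
    rfl
  rw [eq_top_iff]
  intro q _
  obtain ⟨p, rfl⟩ := qmkHom_surjective k (idealK k) q
  obtain ⟨w, rfl⟩ := qmkHom_surjective k _ p
  have hw := DFunLike.congr_fun hcomp w
  rw [LieHom.comp_apply, LieHom.comp_apply] at hw
  rw [← hw]
  exact (F w).2

lemma minGen_Q : MinimallyGenerated k (QAlg k) 4 := by
  classical
  constructor
  · refine ⟨(Finset.univ : Finset (Fin 4)).map ⟨qg k, qg_inj k⟩, ?_, ?_⟩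
    · simp
    · rw [show (((Finset.univ : Finset (Fin 4)).map ⟨qg k, qg_inj k⟩ : Finset (QAlg k)) :
        Set (QAlg k)) = Set.range (qg k) by simp [Finset.coe_map]]
      exact qg_span k
  · intro t ht
    have himg := lieSpan_image_of_surjective k (f2 k) (f2_surj k) ↑t ht
    have h4 : 4 ≤ (t.image (f2 k)).card := by
      apply M_gen_lower (t.image (f2 k))
      rw [Finset.coe_image]
      exact himg
    exact h4.trans Finset.card_image_le

end Transfer


/-- over a field in which `-1` is not a sum of two squares, the quotient
`ℒ₃/I` by the 3-dimensional central ideal `I` above is a 2-step nilpotent Camina Lie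
algebra, minimally generated by 4 elements, of breadth type `(0,3)`. In particular such a
Lie algebra exists over any such field. -/
theorem camina_of_neg_one_not_sum_of_two_squares
    (k : Type*) [Field k] (h : ¬ ∃ a b : k, a ^ 2 + b ^ 2 = -1) :
    IsNilpotentOfClass k (FreeNilp k 2 4 ⧸ idealK k) 2 ∧
    IsCamina k (FreeNilp k 2 4 ⧸ idealK k) ∧
    MinimallyGenerated k (FreeNilp k 2 4 ⧸ idealK k) 4 ∧
    HasBreadthType k (FreeNilp k 2 4 ⧸ idealK k) {0, 3} :=
  ⟨nilpotentClass_Q k, isCamina_Q k h, minGen_Q k, hasBreadthType_Q k h⟩
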